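/- Let p > 5 be prime, 1 ≤ a ≤ 4. Then the sum of x_1 over all nonnegative integer solutions (x_1,...,x_5) of x_1+...+x_5 = 2p-a with each x_i < p is congruent to 0 modulo p. -/

import Mathlib

open Finset

private lemma L_rec (k n : ℕ) : (Finset.Nat.antidiagonalTuple (k+1) n).card
    = ∑ j ∈ Finset.range (n+1), (Finset.Nat.antidiagonalTuple k j).card := by
  rw [Finset.card_eq_sum_card_fiberwise (f := fun x => x 0) (t := Finset.range (n+1))]
  · rw [← Finset.sum_range_reflect]
    refine Finset.sum_congr rfl fun i hi => ?_
    rw [Finset.mem_range] at hi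
    apply Finset.card_nbij' (i := fun x => Fin.tail x) (j := fun y => Fin.cons (n + 1 - 1 - i) y)
    · intro x hx
      simp only [Finset.mem_coe, Finset.mem_filter, Finset.Nat.mem_antidiagonalTuple] at hx
      rw [Fin.sum_univ_succ] at hx
      rw [Finset.mem_coe, Finset.Nat.mem_antidiagonalTuple]
      simp only [Fin.tail]
      omega
    · intro y hy
      rw [Finset.mem_coe, Finset.Nat.mem_antidiagonalTuple] at hy
      simp only [Finset.mem_coe, Finset.mem_filter, Finset.Nat.mem_antidiagonalTuple, Fin.sum_univ_succ,
        Fin.cons_zero, Fin.cons_succ]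
      rw [hy]
      refine ⟨by omega, trivial⟩
    · intro x hx
      simp only [Finset.mem_coe, Finset.mem_filter] at hx
      rw [← hx.2]
      exact Fin.cons_self_tail x
    · intro y _
      exact Fin.tail_cons _ _
  · intro x hx
    rw [Finset.mem_coe, Finset.Nat.mem_antidiagonalTuple] at hx
    simp only [Finset.mem_coe, Finset.mem_range]
    have : x 0 ≤ ∑ i, x i := Finset.single_le_sum (by intro i _; exact Nat.zero_le _) (Finset.mem_univ 0)
    omega

private lemma L_step (k n : ℕ) : (Finset.Nat.antidiagonalTuple (k+1) (n+1)).card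
    = (Finset.Nat.antidiagonalTuple (k+1) n).card + (Finset.Nat.antidiagonalTuple k (n+1)).card := by
  rw [L_rec, L_rec, Finset.sum_range_succ]

private lemma L_zero (k : ℕ) : (Finset.Nat.antidiagonalTuple k 0).card = 1 := by
  rw [Finset.Nat.antidiagonalTuple_zero_right]; rfl

private lemma L_one (n : ℕ) : (Finset.Nat.antidiagonalTuple 1 n).card = 1 := by
  rw [Finset.Nat.antidiagonalTuple_one]; rfl

private lemma L_two (n : ℕ) : (Finset.Nat.antidiagonalTuple 2 n).card = n + 1 := by
  induction n with
  | zero => exact L_zero 2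
  | succ n ih => rw [L_step, ih, L_one]

private lemma L_three (n : ℕ) : 2 * (Finset.Nat.antidiagonalTuple 3 n).card = (n+1)*(n+2) := by
  induction n with
  | zero => rw [L_zero]
  | succ n ih => rw [L_step, Nat.mul_add, ih, L_two]; ring

private lemma L_four (n : ℕ) : 6 * (Finset.Nat.antidiagonalTuple 4 n).card = (n+1)*(n+2)*(n+3) := by
  induction n with
  | zero => rw [L_zero]
  | succ n ih =>
    rw [L_step, Nat.mul_add, ih]
    have h3 := L_three (n+1)
    nlinarith [h3]

private lemma L_five (n : ℕ) : 24 * (Finset.Nat.antidiagonalTuple 5 n).card = (n+1)*(n+2)*(n+3)*(n+4) := by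
  induction n with
  | zero => rw [L_zero]
  | succ n ih =>
    rw [L_step, Nat.mul_add, ih]
    have h4 := L_four (n+1)
    nlinarith [h4]

private lemma p_dvd_L_five (p n a : ℕ) (hp : p.Prime) (hp5 : 5 < p) (ha1 : 1 ≤ a) (ha4 : a ≤ 4)
    (h : n + a = p ∨ n + a = 2 * p) : p ∣ (Finset.Nat.antidiagonalTuple 5 n).card := by
  have h24 : ¬ p ∣ 24 := by
    intro hd
    have := Nat.le_of_dvd (by norm_num) hd
    interval_cases p <;> revert hp hd <;> decide
  have hprod : p ∣ (n+1)*(n+2)*(n+3)*(n+4) := by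
    rcases h with h | h <;> interval_cases a
    · exact ⟨(n+2)*(n+3)*(n+4), by rw [← h]; ring⟩
    · exact ⟨(n+1)*(n+3)*(n+4), by rw [← h]; ring⟩
    · exact ⟨(n+1)*(n+2)*(n+4), by rw [← h]; ring⟩
    · exact ⟨(n+1)*(n+2)*(n+3), by rw [← h]; ring⟩
    · refine ⟨2*(n+2)*(n+3)*(n+4), ?_⟩
      rw [show p * (2*(n+2)*(n+3)*(n+4)) = 2*p*((n+2)*(n+3)*(n+4)) from by ring, ← h]; ring
    · refine ⟨2*(n+1)*(n+3)*(n+4), ?_⟩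
      rw [show p * (2*(n+1)*(n+3)*(n+4)) = 2*p*((n+1)*(n+3)*(n+4)) from by ring, ← h]; ring
    · refine ⟨2*(n+1)*(n+2)*(n+4), ?_⟩
      rw [show p * (2*(n+1)*(n+2)*(n+4)) = 2*p*((n+1)*(n+2)*(n+4)) from by ring, ← h]; ring
    · refine ⟨2*(n+1)*(n+2)*(n+3), ?_⟩
      rw [show p * (2*(n+1)*(n+2)*(n+3)) = 2*p*((n+1)*(n+2)*(n+3)) from by ring, ← h]; ring
  rw [← L_five] at hprod
  exact (hp.coprime_iff_not_dvd.mpr h24).dvd_of_dvd_mul_left hprod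

theorem stmt3 (p : ℕ) (hp : p.Prime) (hp5 : 5 < p) (a : ℕ) (ha1 : 1 ≤ a) (ha4 : a ≤ 4) :
    p ∣ ∑ x ∈ (Fintype.piFinset fun _ : Fin 5 => Finset.range p).filter
        (fun x => ∑ i, x i = 2 * p - a), x 0 := by
  set T := (Fintype.piFinset fun _ : Fin 5 => Finset.range p).filter
      (fun x => ∑ i, x i = 2 * p - a) with hT
  set A := Finset.Nat.antidiagonalTuple 5 (2 * p - a) with hA
  set B := Finset.Nat.antidiagonalTuple 5 (p - a) with hB
  -- Step 1 : p ∣ T.card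
  have hTA : A.filter (fun x => ∀ i, x i < p) = T := by
    ext x
    simp only [hA, hT, Finset.mem_filter, Finset.Nat.mem_antidiagonalTuple,
      Fintype.mem_piFinset, Finset.mem_range]
    tauto
  have hbad : A.filter (fun x => ¬ ∀ i, x i < p)
      = Finset.univ.biUnion (fun j : Fin 5 => A.filter (fun x => p ≤ x j)) := by
    ext x
    simp only [Finset.mem_filter, Finset.mem_biUnion, Finset.mem_univ, true_and, not_forall,
      not_lt]
    tauto
  have hdisj : ∀ j ∈ (Finset.univ : Finset (Fin 5)), ∀ j' ∈ Finset.univ, j ≠ j' →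
      Disjoint (A.filter (fun x => p ≤ x j)) (A.filter (fun x => p ≤ x j')) := by
    intro j _ j' _ hne
    rw [Finset.disjoint_left]
    intro x hx hx'
    simp only [Finset.mem_filter, hA, Finset.Nat.mem_antidiagonalTuple] at hx hx'
    have hsub : ({j, j'} : Finset (Fin 5)) ⊆ Finset.univ := Finset.subset_univ _
    have := Finset.sum_le_sum_of_subset (f := x) hsub
    rw [Finset.sum_pair hne] at this
    omega
  have hfib : ∀ j : Fin 5, (A.filter (fun x => p ≤ x j)).card = B.card := by
    intro j
    apply Finset.card_nbij' (i := fun x => Function.update x j (x j - p))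
      (j := fun y => Function.update y j (y j + p))
    · intro x hx
      simp only [Finset.mem_coe, Finset.mem_filter, hA, Finset.Nat.mem_antidiagonalTuple] at hx
      obtain ⟨hx1, hx2⟩ := hx
      rw [Finset.mem_coe, hB, Finset.Nat.mem_antidiagonalTuple,
        Finset.sum_update_of_mem (Finset.mem_univ j)]
      have h2 := Finset.add_sum_erase Finset.univ x (Finset.mem_univ j)
      rw [Finset.erase_eq] at h2
      omega
    · intro y hy
      rw [Finset.mem_coe, hB, Finset.Nat.mem_antidiagonalTuple] at hy
      simp only [Finset.mem_coe, Finset.mem_filter, hA, Finset.Nat.mem_antidiagonalTuple,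
        Function.update_self]
      rw [Finset.sum_update_of_mem (Finset.mem_univ j)]
      have h2 := Finset.add_sum_erase Finset.univ y (Finset.mem_univ j)
      rw [Finset.erase_eq] at h2
      constructor
      · omega
      · omega
    · intro x hx
      simp only [Finset.mem_coe, Finset.mem_filter] at hx
      simp only [Function.update_idem, Function.update_self]
      rw [show x j - p + p = x j by omega, Function.update_eq_self]
    · intro y _
      simp only [Function.update_idem, Function.update_self]
      rw [show y j + p - p = y j by omega, Function.update_eq_self]
  have hcount : A.card = T.card + 5 * B.card := by
    have h1 := Finset.card_filter_add_card_filter_not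
      (s := A) (p := fun x => ∀ i, x i < p)
    rw [hTA, hbad, Finset.card_biUnion hdisj] at h1
    simp only [hfib, Finset.sum_const, Finset.card_univ, Fintype.card_fin, smul_eq_mul] at h1
    omega
  have hAcard : p ∣ A.card := by
    refine p_dvd_L_five p _ a hp hp5 ha1 ha4 (Or.inr ?_)
    omega
  have hBcard : p ∣ B.card := by
    refine p_dvd_L_five p _ a hp hp5 ha1 ha4 (Or.inl ?_)
    omega
  have hTcard : p ∣ T.card := by
    have : T.card = A.card - 5 * B.card := by omega
    rw [this]
    exact Nat.dvd_sub hAcard (hBcard.mul_left 5)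
  -- Step 2 : symmetry
  have hsym : ∀ i : Fin 5, ∑ x ∈ T, x i = ∑ x ∈ T, x 0 := by
    intro i
    refine Finset.sum_nbij' (fun x => x ∘ Equiv.swap 0 i) (fun x => x ∘ Equiv.swap 0 i) ?_ ?_ ?_ ?_ ?_
    · intro x hx
      simp only [hT, Finset.mem_filter, Fintype.mem_piFinset, Finset.mem_range] at hx ⊢
      exact ⟨fun j => hx.1 _, by rw [← hx.2]; exact Equiv.sum_comp (Equiv.swap 0 i) x⟩
    · intro x hx
      simp only [hT, Finset.mem_filter, Fintype.mem_piFinset, Finset.mem_range] at hx ⊢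
      exact ⟨fun j => hx.1 _, by rw [← hx.2]; exact Equiv.sum_comp (Equiv.swap 0 i) x⟩
    · intro x _
      funext j
      simp [Function.comp, Equiv.swap_apply_self]
    · intro x _
      funext j
      simp [Function.comp, Equiv.swap_apply_self]
    · intro x _
      simp [Function.comp, Equiv.swap_apply_left]
  have hkey : 5 * (∑ x ∈ T, x 0) = T.card * (2 * p - a) := by
    have h1 : ∑ x ∈ T, ∑ i, x i = ∑ i : Fin 5, ∑ x ∈ T, x i := Finset.sum_comm
    have h2 : ∑ x ∈ T, ∑ i, x i = T.card * (2 * p - a) := by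
      have e1 : ∑ x ∈ T, ∑ i, x i = ∑ _x ∈ T, (2 * p - a) :=
        Finset.sum_congr rfl (fun x hx => (Finset.mem_filter.mp hx).2)
      rw [e1, Finset.sum_const, smul_eq_mul]
    have e2 : ∑ i : Fin 5, ∑ x ∈ T, x i = ∑ _i : Fin 5, ∑ x ∈ T, x 0 :=
      Finset.sum_congr rfl (fun i _ => hsym i)
    rw [e2] at h1
    simp only [Finset.sum_const, Finset.card_univ, Fintype.card_fin, smul_eq_mul] at h1
    rw [h1] at h2
    exact h2
  have h5 : ¬ p ∣ 5 := fun hd => by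
    have := Nat.le_of_dvd (by norm_num) hd
    exact absurd hp5 (Nat.not_lt.mpr this)
  have : p ∣ 5 * ∑ x ∈ T, x 0 := by
    rw [hkey]
    exact hTcard.mul_right _
  exact (hp.coprime_iff_not_dvd.mpr h5).dvd_of_dvd_mul_left this
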